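/- Two triple ratios and two quadruple ratios form a complete invariant for quadruples of flags: if ((v₀,η₀),…,(v₃,η₃)) and ((v₀′,η₀′),…,(v₃′,η₃′)) are ordered quadruples of flags in general position with t₀₁₂ = t₀₁₂′, t₀₂₃ = t₀₂₃′, e₀₂ = e₀₂′ and e₂₀ = e₂₀′ (where t₀₁₂ = 𝕋(F₀,F₁,F₂), t₀₂₃ = 𝕋(F₀,F₂,F₃), and e₀₂, e₂₀ are the quadruple ratios), then there exists T ∈ SL(3,ℝ) such that for each i, T v_i is a nonzero scalar multiple of v_i′ and η_i ∘ T⁻¹ is a nonzero scalar multiple of η_i′. -/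

import Mathlib

/-- The triple ratio of three flags `(vᵢ, ηᵢ)` of `ℝP²`. -/
noncomputable def tripleRatio (v₀ v₁ v₂ : Fin 3 → ℝ)
    (η₀ η₁ η₂ : (Fin 3 → ℝ) →ₗ[ℝ] ℝ) : ℝ :=
  (η₀ v₁ * η₁ v₂ * η₂ v₀) / (η₀ v₂ * η₁ v₀ * η₂ v₁)

/-- An ordered quadruple of flags `(v i, η i)` of `ℝP²` in general position. -/
def IsGenPosQuad (v : Fin 4 → Fin 3 → ℝ) (η : Fin 4 → (Fin 3 → ℝ) →ₗ[ℝ] ℝ) : Prop :=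
  (∀ i, v i ≠ 0) ∧ (∀ i, η i ≠ 0) ∧ (∀ i, η i (v i) = 0) ∧
  (∀ i j k : Fin 4, i ≠ j → i ≠ k → j ≠ k → LinearIndependent ℝ ![v i, v j, v k]) ∧
  (∀ i j k : Fin 4, i ≠ j → i ≠ k → j ≠ k → LinearIndependent ℝ ![η i, η j, η k]) ∧
  (∀ i j, i ≠ j → η i (v j) ≠ 0)

lemma quad_setup (v : Fin 4 → Fin 3 → ℝ) (η : Fin 4 → (Fin 3 → ℝ) →ₗ[ℝ] ℝ)
    (h : IsGenPosQuad v η)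
    (L : Fin 4 → Fin 4 → (Fin 3 → ℝ) →ₗ[ℝ] ℝ)
    (hL : ∀ i j, i ≠ j → L i j ≠ 0 ∧ L i j (v i) = 0 ∧ L i j (v j) = 0) :
    ∃ B : Module.Basis (Fin 3) ℝ (Fin 3 → ℝ), ∃ a : Fin 3 → ℝ,
      (B 0 = v 0 ∧ B 1 = v 1 ∧ B 2 = v 2) ∧
      (∀ j, a j ≠ 0) ∧
      v 3 = a 0 • v 0 + a 1 • v 1 + a 2 • v 2 ∧
      η 0 (v 3) = a 1 * η 0 (v 1) + a 2 * η 0 (v 2) ∧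
      η 2 (v 3) = a 0 * η 2 (v 0) + a 1 * η 2 (v 1) ∧
      a 0 * η 3 (v 0) + a 1 * η 3 (v 1) + a 2 * η 3 (v 2) = 0 ∧
      tripleRatio (v 0) (v 3) (v 1) (η 0) (L 2 3) (L 1 2)
        = -(η 0 (v 3)) / (a 1 * η 0 (v 1)) ∧
      tripleRatio (v 2) (v 1) (v 3) (η 2) (L 0 1) (L 0 3)
        = -(a 1 * η 2 (v 1)) / (η 2 (v 3)) := by
  obtain ⟨hv0, hη0, hηv, hvli, hηli, hηvne⟩ := h
  have hli := hvli 0 1 2 (by decide) (by decide) (by decide)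
  set B : Module.Basis (Fin 3) ℝ (Fin 3 → ℝ) :=
    basisOfLinearIndependentOfCardEqFinrank hli (by simp) with hB
  have hBc : ∀ j : Fin 3, B j = ![v 0, v 1, v 2] j := by
    intro j; rw [hB, coe_basisOfLinearIndependentOfCardEqFinrank]
  have hB0 : B 0 = v 0 := hBc 0
  have hB1 : B 1 = v 1 := hBc 1
  have hB2 : B 2 = v 2 := hBc 2
  set a : Fin 3 → ℝ := fun j => B.repr (v 3) j with ha
  have hdec : v 3 = a 0 • v 0 + a 1 • v 1 + a 2 • v 2 := by
    conv_lhs => rw [← B.sum_repr (v 3)]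
    rw [Fin.sum_univ_three, hB0, hB1, hB2]
  -- a j ≠ 0
  have hane : ∀ j, a j ≠ 0 := by
    intro j hj
    fin_cases j
    · -- a 0 = 0 : contradict indep of v1 v2 v3
      have hli' := hvli 1 2 3 (by decide) (by decide) (by decide)
      rw [Fintype.linearIndependent_iff] at hli'
      have := hli' ![a 1, a 2, -1] (by
        rw [Fin.sum_univ_three]
        simp only [Matrix.cons_val_zero, Matrix.cons_val_one, Matrix.head_cons,
          Matrix.cons_val_two, Matrix.tail_cons]
        rw [hdec]; rw [show a 0 = 0 from hj]; module) 2
      simp at this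
    · have hli' := hvli 0 2 3 (by decide) (by decide) (by decide)
      rw [Fintype.linearIndependent_iff] at hli'
      have := hli' ![a 0, a 2, -1] (by
        rw [Fin.sum_univ_three]
        simp only [Matrix.cons_val_zero, Matrix.cons_val_one, Matrix.head_cons,
          Matrix.cons_val_two, Matrix.tail_cons]
        rw [hdec]; rw [show a 1 = 0 from hj]; module) 2
      simp at this
    · have hli' := hvli 0 1 3 (by decide) (by decide) (by decide)
      rw [Fintype.linearIndependent_iff] at hli'
      have := hli' ![a 0, a 1, -1] (by
        rw [Fin.sum_univ_three]
        simp only [Matrix.cons_val_zero, Matrix.cons_val_one, Matrix.head_cons,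
          Matrix.cons_val_two, Matrix.tail_cons]
        rw [hdec]; rw [show a 2 = 0 from hj]; module) 2
      simp at this
  have hη03 : η 0 (v 3) = a 1 * η 0 (v 1) + a 2 * η 0 (v 2) := by
    rw [hdec]; simp [hηv 0, mul_comm]
  have hη23 : η 2 (v 3) = a 0 * η 2 (v 0) + a 1 * η 2 (v 1) := by
    rw [hdec]; simp [hηv 2, mul_comm]
  have hη33 : a 0 * η 3 (v 0) + a 1 * η 3 (v 1) + a 2 * η 3 (v 2) = 0 := by
    have := hηv 3; rw [hdec] at this; simpa [mul_comm] using this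
  -- a functional vanishing on v0 v1 v2 is zero
  have hzero : ∀ ℓ : (Fin 3 → ℝ) →ₗ[ℝ] ℝ, ℓ (v 0) = 0 → ℓ (v 1) = 0 → ℓ (v 2) = 0 → ℓ = 0 := by
    intro ℓ h0 h1 h2
    apply B.ext
    intro j; fin_cases j <;> simp [hB0, hB1, hB2, h0, h1, h2]
  -- L 2 3 facts
  obtain ⟨hL23ne, hL23v2, hL23v3⟩ := hL 2 3 (by decide)
  have hrel23 : a 0 * L 2 3 (v 0) + a 1 * L 2 3 (v 1) = 0 := by
    have := hL23v3; rw [hdec] at this; simp [hL23v2, mul_comm] at this; linarith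
  have hL23v0 : L 2 3 (v 0) ≠ 0 := by
    intro h0
    have h1 : L 2 3 (v 1) = 0 := by
      have := hrel23; rw [h0] at this
      have := mul_eq_zero.mp (by linarith : a 1 * L 2 3 (v 1) = 0)
      tauto
    exact hL23ne (hzero _ h0 h1 hL23v2)
  -- L 1 2 facts
  obtain ⟨hL12ne, hL12v1, hL12v2⟩ := hL 1 2 (by decide)
  have hL12v3 : L 1 2 (v 3) = a 0 * L 1 2 (v 0) := by
    rw [hdec]; simp [hL12v1, hL12v2, mul_comm]
  have hL12v0 : L 1 2 (v 0) ≠ 0 := by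
    intro h0; exact hL12ne (hzero _ h0 hL12v1 hL12v2)
  -- L 0 1 facts
  obtain ⟨hL01ne, hL01v0, hL01v1⟩ := hL 0 1 (by decide)
  have hL01v3 : L 0 1 (v 3) = a 2 * L 0 1 (v 2) := by
    rw [hdec]; simp [hL01v0, hL01v1, mul_comm]
  have hL01v2 : L 0 1 (v 2) ≠ 0 := by
    intro h0; exact hL01ne (hzero _ hL01v0 hL01v1 h0)
  -- L 0 3 facts
  obtain ⟨hL03ne, hL03v0, hL03v3⟩ := hL 0 3 (by decide)
  have hrel03 : a 1 * L 0 3 (v 1) + a 2 * L 0 3 (v 2) = 0 := by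
    have := hL03v3; rw [hdec] at this; simp [hL03v0, mul_comm] at this; linarith
  have hL03v1 : L 0 3 (v 1) ≠ 0 := by
    intro h1
    have h2 : L 0 3 (v 2) = 0 := by
      have := hrel03; rw [h1] at this
      have := mul_eq_zero.mp (by linarith : a 2 * L 0 3 (v 2) = 0)
      tauto
    exact hL03ne (hzero _ hL03v0 h1 h2)
  refine ⟨B, a, ⟨hB0, hB1, hB2⟩, hane, hdec, hη03, hη23, hη33, ?_, ?_⟩
  · -- e02 formula
    unfold tripleRatio
    have h01 := hηvne 0 1 (by decide)
    have hD1 : η 0 (v 1) * L 2 3 (v 0) * L 1 2 (v 3) ≠ 0 := by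
      rw [hL12v3]
      exact mul_ne_zero (mul_ne_zero h01 hL23v0) (mul_ne_zero (hane 0) hL12v0)
    have hD2 : a 1 * η 0 (v 1) ≠ 0 := mul_ne_zero (hane 1) h01
    rw [div_eq_div_iff hD1 hD2, hL12v3]
    linear_combination (η 0 (v 3) * L 1 2 (v 0) * η 0 (v 1)) * hrel23
  · -- e20 formula
    unfold tripleRatio
    have h21 := hηvne 2 1 (by decide)
    have h23 : η 2 (v 3) ≠ 0 := hηvne 2 3 (by decide)
    have hD1 : η 2 (v 3) * L 0 1 (v 2) * L 0 3 (v 1) ≠ 0 :=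
      mul_ne_zero (mul_ne_zero h23 hL01v2) hL03v1
    rw [div_eq_div_iff hD1 h23, hL01v3]
    linear_combination (η 2 (v 1) * L 0 1 (v 2) * η 2 (v 3)) * hrel03



lemma ratio_algebra
    (p01 p02 p10 p12 p20 p21 p30 p31 p32
     q01 q02 q10 q12 q20 q21 q30 q31 q32 : ℝ)
    (hp01 : p01 ≠ 0) (hp02 : p02 ≠ 0) (hp10 : p10 ≠ 0) (hp12 : p12 ≠ 0)
    (hp20 : p20 ≠ 0) (hp21 : p21 ≠ 0) (hp30 : p30 ≠ 0) (hp32 : p32 ≠ 0)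
    (hq01 : q01 ≠ 0) (hq02 : q02 ≠ 0) (hq10 : q10 ≠ 0) (hq12 : q12 ≠ 0)
    (hq20 : q20 ≠ 0) (hq21 : q21 ≠ 0) (hq30 : q30 ≠ 0) (hq32 : q32 ≠ 0)
    (hpS0 : p01 + p02 ≠ 0) (hpS2 : p20 + p21 ≠ 0)
    (hqS0 : q01 + q02 ≠ 0) (hqS2 : q20 + q21 ≠ 0)
    (hp3 : p30 + p31 + p32 = 0) (hq3 : q30 + q31 + q32 = 0)
    (hE02 : (p01 + p02) / p01 = (q01 + q02) / q01)
    (hE20 : p21 / (p20 + p21) = q21 / (q20 + q21))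
    (hT012 : p01 * p12 * p20 / (p02 * p10 * p21) = q01 * q12 * q20 / (q02 * q10 * q21))
    (hT023 : p02 * (p20 + p21) * p30 / ((p01 + p02) * p20 * p32)
           = q02 * (q20 + q21) * q30 / ((q01 + q02) * q20 * q32)) :
    ∃ l0 l1 l2 l3 : ℝ, l0 ≠ 0 ∧ l1 ≠ 0 ∧ l2 ≠ 0 ∧ l3 ≠ 0 ∧
      p01 = l0 * q01 ∧ p02 = l0 * q02 ∧ p10 = l1 * q10 ∧ p12 = l1 * q12 ∧
      p20 = l2 * q20 ∧ p21 = l2 * q21 ∧ p30 = l3 * q30 ∧ p31 = l3 * q31 ∧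
      p32 = l3 * q32 := by
  have c0 : (p01 + p02) * q01 = (q01 + q02) * p01 := by
    rw [div_eq_div_iff hp01 hq01] at hE02; linarith
  have c0' : p02 * q01 = q02 * p01 := by linear_combination c0
  have c2 : p21 * (q20 + q21) = q21 * (p20 + p21) := by
    rw [div_eq_div_iff hpS2 hqS2] at hE20; linarith
  have c2' : p21 * q20 = q21 * p20 := by linear_combination c2
  have c2'' : p20 * (q20 + q21) = q20 * (p20 + p21) := by linear_combination -c2'
  have h1 : (p01 * p12 * p20) * (q02 * q10 * q21) = (q01 * q12 * q20) * (p02 * p10 * p21) := by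
    rw [div_eq_div_iff (mul_ne_zero (mul_ne_zero hp02 hp10) hp21)
      (mul_ne_zero (mul_ne_zero hq02 hq10) hq21)] at hT012
    exact hT012
  have key1 : p12 * q10 = p10 * q12 := by
    apply mul_left_cancel₀
      (mul_ne_zero (mul_ne_zero (mul_ne_zero hp01 hq02) hp20) hq21)
    linear_combination h1 + (p10*q12*q01*p02)*c2' + (p10*q12*q21*p20)*c0'
  have h2 : (p02 * (p20 + p21) * p30) * ((q01 + q02) * q20 * q32)
      = (q02 * (q20 + q21) * q30) * ((p01 + p02) * p20 * p32) := by
    rw [div_eq_div_iff (mul_ne_zero (mul_ne_zero hpS0 hp20) hp32)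
      (mul_ne_zero (mul_ne_zero hqS0 hq20) hq32)] at hT023
    exact hT023
  have aux : q02 * (q20 + q21) * (p01 + p02) * p20 = p02 * (p20 + p21) * (q01 + q02) * q20 := by
    linear_combination (q02 * (p01 + p02)) * c2'' - ((p20 + p21) * q20) * c0'
  have key3 : p30 * q32 = p32 * q30 := by
    apply mul_left_cancel₀
      (mul_ne_zero (mul_ne_zero (mul_ne_zero hp02 hpS2) hqS0) hq20)
    linear_combination h2 + (q30 * p32) * aux
  refine ⟨p01 / q01, p10 / q10, p21 / q21, p30 / q30,
    div_ne_zero hp01 hq01, div_ne_zero hp10 hq10, div_ne_zero hp21 hq21,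
    div_ne_zero hp30 hq30, ?_, ?_, ?_, ?_, ?_, ?_, ?_, ?_, ?_⟩
  · field_simp
  · field_simp; linear_combination c0'
  · field_simp
  · field_simp; linear_combination key1
  · field_simp; linear_combination -c2'
  · field_simp
  · field_simp
  · field_simp; linear_combination key3 + q30*hp3 - p30*hq3
  · field_simp; linear_combination -key3


lemma exists_cbrt (D : ℝ) : ∃ s : ℝ, s ^ 3 = D := by
  rcases le_or_gt 0 D with hD | hD
  · exact ⟨D ^ ((1:ℝ)/3), by
      rw [← Real.rpow_natCast (D ^ ((1:ℝ)/3)) 3, ← Real.rpow_mul hD]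
      norm_num⟩
  · refine ⟨-((-D) ^ ((1:ℝ)/3)), ?_⟩
    rw [Odd.neg_pow (by decide), ← Real.rpow_natCast ((-D) ^ ((1:ℝ)/3)) 3,
      ← Real.rpow_mul (by linarith)]
    norm_num

/-- Two triple ratios `t₀₁₂, t₀₂₃` and the two quadruple ratios `e₀₂, e₂₀` form a
complete invariant for ordered quadruples of flags in general position.  Here, for
`i ≠ j`, `L i j` (resp. `L' i j`) is a nonzero functional vanishing on `v i` and
`v j` (resp. on `v' i`, `v' j`), representing the line through the two points, and
`e₀₂ = 𝕋((v₀,η₀),(v₃,ℓ₂₃),(v₁,ℓ₁₂))`, `e₂₀ = 𝕋((v₂,η₂),(v₁,ℓ₀₁),(v₃,ℓ₀₃))`. -/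
theorem quadruple_of_flags_determined_by_ratios
    (v v' : Fin 4 → Fin 3 → ℝ) (η η' : Fin 4 → (Fin 3 → ℝ) →ₗ[ℝ] ℝ)
    (h : IsGenPosQuad v η) (h' : IsGenPosQuad v' η')
    (L L' : Fin 4 → Fin 4 → (Fin 3 → ℝ) →ₗ[ℝ] ℝ)
    (hL : ∀ i j, i ≠ j → L i j ≠ 0 ∧ L i j (v i) = 0 ∧ L i j (v j) = 0)
    (hL' : ∀ i j, i ≠ j → L' i j ≠ 0 ∧ L' i j (v' i) = 0 ∧ L' i j (v' j) = 0)
    (ht012 : tripleRatio (v 0) (v 1) (v 2) (η 0) (η 1) (η 2) =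
             tripleRatio (v' 0) (v' 1) (v' 2) (η' 0) (η' 1) (η' 2))
    (ht023 : tripleRatio (v 0) (v 2) (v 3) (η 0) (η 2) (η 3) =
             tripleRatio (v' 0) (v' 2) (v' 3) (η' 0) (η' 2) (η' 3))
    (he02 : tripleRatio (v 0) (v 3) (v 1) (η 0) (L 2 3) (L 1 2) =
            tripleRatio (v' 0) (v' 3) (v' 1) (η' 0) (L' 2 3) (L' 1 2))
    (he20 : tripleRatio (v 2) (v 1) (v 3) (η 2) (L 0 1) (L 0 3) =
            tripleRatio (v' 2) (v' 1) (v' 3) (η' 2) (L' 0 1) (L' 0 3)) :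
    ∃ T : Matrix.SpecialLinearGroup (Fin 3) ℝ, ∀ i,
      (∃ c : ℝ, c ≠ 0 ∧ T.1.mulVec (v i) = c • v' i) ∧
      (∃ d : ℝ, d ≠ 0 ∧ (η i).comp (T⁻¹).1.mulVecLin = d • η' i) := by
  obtain ⟨B, a, ⟨hB0, hB1, hB2⟩, hane, hdec, hη03, hη23, hη33, hfe02, hfe20⟩ :=
    quad_setup v η h L hL
  obtain ⟨B', a', ⟨hB'0, hB'1, hB'2⟩, hane', hdec', hη03', hη23', hη33', hfe02', hfe20'⟩ :=
    quad_setup v' η' h' L' hL'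
  have hηv := h.2.2.1
  have hηv' := h'.2.2.1
  have hne := h.2.2.2.2.2
  have hne' := h'.2.2.2.2.2
  -- p and q nonzero
  have hp : ∀ i j : Fin 4, i ≠ j → ∀ k : Fin 3, a k * η i (v j) ≠ 0 :=
    fun i j hij k => mul_ne_zero (hane k) (hne i j hij)
  have hq : ∀ i j : Fin 4, i ≠ j → ∀ k : Fin 3, a' k * η' i (v' j) ≠ 0 :=
    fun i j hij k => mul_ne_zero (hane' k) (hne' i j hij)
  -- canonical forms of the four given equalities
  have hE02 : (a 1 * η 0 (v 1) + a 2 * η 0 (v 2)) / (a 1 * η 0 (v 1))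
      = (a' 1 * η' 0 (v' 1) + a' 2 * η' 0 (v' 2)) / (a' 1 * η' 0 (v' 1)) := by
    rw [hfe02, hfe02', hη03, hη03'] at he02
    rw [neg_div, neg_div, neg_inj] at he02
    exact he02
  have hE20 : (a 1 * η 2 (v 1)) / (a 0 * η 2 (v 0) + a 1 * η 2 (v 1))
      = (a' 1 * η' 2 (v' 1)) / (a' 0 * η' 2 (v' 0) + a' 1 * η' 2 (v' 1)) := by
    rw [hfe20, hfe20', hη23, hη23'] at he20
    rw [neg_div, neg_div, neg_inj] at he20
    exact he20
  have hT012fm : ∀ (w : Fin 4 → Fin 3 → ℝ) (ξ : Fin 4 → (Fin 3 → ℝ) →ₗ[ℝ] ℝ)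
      (α : Fin 3 → ℝ), (∀ k, α k ≠ 0) → (∀ i j, i ≠ j → ξ i (w j) ≠ 0) →
      tripleRatio (w 0) (w 1) (w 2) (ξ 0) (ξ 1) (ξ 2)
        = (α 1 * ξ 0 (w 1)) * (α 2 * ξ 1 (w 2)) * (α 0 * ξ 2 (w 0))
          / ((α 2 * ξ 0 (w 2)) * (α 0 * ξ 1 (w 0)) * (α 1 * ξ 2 (w 1))) := by
    intro w ξ α hα hξ
    unfold tripleRatio
    rw [div_eq_div_iff
      (mul_ne_zero (mul_ne_zero (hξ 0 2 (by decide)) (hξ 1 0 (by decide))) (hξ 2 1 (by decide)))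
      (mul_ne_zero (mul_ne_zero
        (mul_ne_zero (hα 2) (hξ 0 2 (by decide)))
        (mul_ne_zero (hα 0) (hξ 1 0 (by decide))))
        (mul_ne_zero (hα 1) (hξ 2 1 (by decide))))]
    ring
  have hT012 : (a 1 * η 0 (v 1)) * (a 2 * η 1 (v 2)) * (a 0 * η 2 (v 0))
        / ((a 2 * η 0 (v 2)) * (a 0 * η 1 (v 0)) * (a 1 * η 2 (v 1)))
      = (a' 1 * η' 0 (v' 1)) * (a' 2 * η' 1 (v' 2)) * (a' 0 * η' 2 (v' 0))
        / ((a' 2 * η' 0 (v' 2)) * (a' 0 * η' 1 (v' 0)) * (a' 1 * η' 2 (v' 1))) := by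
    rw [← hT012fm v η a hane hne, ← hT012fm v' η' a' hane' hne']
    exact ht012
  have hT023fm : ∀ (w : Fin 4 → Fin 3 → ℝ) (ξ : Fin 4 → (Fin 3 → ℝ) →ₗ[ℝ] ℝ)
      (α : Fin 3 → ℝ), (∀ k, α k ≠ 0) → (∀ i j, i ≠ j → ξ i (w j) ≠ 0) →
      ξ 0 (w 3) = α 1 * ξ 0 (w 1) + α 2 * ξ 0 (w 2) →
      ξ 2 (w 3) = α 0 * ξ 2 (w 0) + α 1 * ξ 2 (w 1) →
      tripleRatio (w 0) (w 2) (w 3) (ξ 0) (ξ 2) (ξ 3)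
        = (α 2 * ξ 0 (w 2)) * (α 0 * ξ 2 (w 0) + α 1 * ξ 2 (w 1)) * (α 0 * ξ 3 (w 0))
          / ((α 1 * ξ 0 (w 1) + α 2 * ξ 0 (w 2)) * (α 0 * ξ 2 (w 0)) * (α 2 * ξ 3 (w 2))) := by
    intro w ξ α hα hξ h03 h23
    unfold tripleRatio
    have hd1 : ξ 0 (w 3) * ξ 2 (w 0) * ξ 3 (w 2) ≠ 0 :=
      mul_ne_zero (mul_ne_zero (hξ 0 3 (by decide)) (hξ 2 0 (by decide))) (hξ 3 2 (by decide))
    have hd2 : (α 1 * ξ 0 (w 1) + α 2 * ξ 0 (w 2)) * (α 0 * ξ 2 (w 0)) * (α 2 * ξ 3 (w 2)) ≠ 0 := by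
      refine mul_ne_zero (mul_ne_zero ?_ (mul_ne_zero (hα 0) (hξ 2 0 (by decide))))
        (mul_ne_zero (hα 2) (hξ 3 2 (by decide)))
      rw [← h03]; exact hξ 0 3 (by decide)
    rw [div_eq_div_iff hd1 hd2, h03, h23]
    ring
  have hT023 : (a 2 * η 0 (v 2)) * (a 0 * η 2 (v 0) + a 1 * η 2 (v 1)) * (a 0 * η 3 (v 0))
        / ((a 1 * η 0 (v 1) + a 2 * η 0 (v 2)) * (a 0 * η 2 (v 0)) * (a 2 * η 3 (v 2)))
      = (a' 2 * η' 0 (v' 2)) * (a' 0 * η' 2 (v' 0) + a' 1 * η' 2 (v' 1)) * (a' 0 * η' 3 (v' 0))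
        / ((a' 1 * η' 0 (v' 1) + a' 2 * η' 0 (v' 2)) * (a' 0 * η' 2 (v' 0)) * (a' 2 * η' 3 (v' 2))) := by
    rw [← hT023fm v η a hane hne hη03 hη23, ← hT023fm v' η' a' hane' hne' hη03' hη23']
    exact ht023
  -- apply the algebra lemma
  obtain ⟨l0, l1, l2, l3, hl0, hl1, hl2, hl3, e01, e02, e10, e12, e20, e21, e30, e31, e32⟩ :=
    ratio_algebra
      (a 1 * η 0 (v 1)) (a 2 * η 0 (v 2)) (a 0 * η 1 (v 0)) (a 2 * η 1 (v 2))
      (a 0 * η 2 (v 0)) (a 1 * η 2 (v 1)) (a 0 * η 3 (v 0)) (a 1 * η 3 (v 1)) (a 2 * η 3 (v 2))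
      (a' 1 * η' 0 (v' 1)) (a' 2 * η' 0 (v' 2)) (a' 0 * η' 1 (v' 0)) (a' 2 * η' 1 (v' 2))
      (a' 0 * η' 2 (v' 0)) (a' 1 * η' 2 (v' 1)) (a' 0 * η' 3 (v' 0)) (a' 1 * η' 3 (v' 1))
      (a' 2 * η' 3 (v' 2))
      (hp 0 1 (by decide) 1) (hp 0 2 (by decide) 2) (hp 1 0 (by decide) 0)
      (hp 1 2 (by decide) 2) (hp 2 0 (by decide) 0) (hp 2 1 (by decide) 1)
      (hp 3 0 (by decide) 0) (hp 3 2 (by decide) 2)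
      (hq 0 1 (by decide) 1) (hq 0 2 (by decide) 2) (hq 1 0 (by decide) 0)
      (hq 1 2 (by decide) 2) (hq 2 0 (by decide) 0) (hq 2 1 (by decide) 1)
      (hq 3 0 (by decide) 0) (hq 3 2 (by decide) 2)
      (by rw [← hη03]; exact hne 0 3 (by decide))
      (by rw [← hη23]; exact hne 2 3 (by decide))
      (by rw [← hη03']; exact hne' 0 3 (by decide))
      (by rw [← hη23']; exact hne' 2 3 (by decide))
      hη33 hη33' hE02 hE20 hT012 hT023
  -- construct the linear map
  set c : Fin 3 → ℝ := fun j => a' j / a j with hcdef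
  have hcne : ∀ j, c j ≠ 0 := fun j => div_ne_zero (hane' j) (hane j)
  have hac : ∀ j, a j * c j = a' j := fun j => by
    simp only [hcdef]; exact mul_div_cancel₀ (a' j) (hane j) |>.symm ▸ (by field_simp)
  set f : (Fin 3 → ℝ) →ₗ[ℝ] (Fin 3 → ℝ) := B.constr ℝ (fun j => c j • B' j) with hfdef
  set g : (Fin 3 → ℝ) →ₗ[ℝ] (Fin 3 → ℝ) := B'.constr ℝ (fun j => (c j)⁻¹ • B j) with hgdef
  have hfB : ∀ j, f (B j) = c j • B' j := fun j => by
    rw [hfdef, Module.Basis.constr_basis]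
  have hfg : f ∘ₗ g = LinearMap.id := by
    apply B'.ext
    intro j
    rw [LinearMap.comp_apply, hgdef, Module.Basis.constr_basis, map_smul, hfB, smul_smul,
      inv_mul_cancel₀ (hcne j)]
    simp
  set Mm := LinearMap.toMatrix' f with hMm
  have hMmV : ∀ x, Mm.mulVec x = f x := by
    intro x
    rw [← Matrix.toLin'_apply, hMm, Matrix.toLin'_toMatrix']
  have hMG : Mm * LinearMap.toMatrix' g = 1 := by
    rw [← LinearMap.toMatrix'_comp, hfg, LinearMap.toMatrix'_id]
  have hdet : Mm.det ≠ 0 := by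
    intro h0
    have := congrArg Matrix.det hMG
    rw [Matrix.det_mul, h0, Matrix.det_one] at this
    simp at this
  obtain ⟨s, hs3⟩ := exists_cbrt (Mm.det)⁻¹
  have hsne : s ≠ 0 := by
    intro h0
    rw [h0] at hs3
    simp only [ne_eq, zero_pow, OfNat.ofNat_ne_zero, not_false_eq_true] at hs3
    exact hdet (inv_eq_zero.mp hs3.symm)
  have hdet1 : (s • Mm).det = 1 := by
    rw [Matrix.det_smul]
    simp only [Fintype.card_fin]
    rw [hs3]
    exact inv_mul_cancel₀ hdet
  refine ⟨⟨s • Mm, hdet1⟩, ?_⟩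
  set T : Matrix.SpecialLinearGroup (Fin 3) ℝ := ⟨s • Mm, hdet1⟩ with hT
  have hTcoe : T.1 = s • Mm := rfl
  have hTinv : T.1 * (T⁻¹).1 = 1 := by
    rw [← Matrix.SpecialLinearGroup.coe_mul, mul_inv_cancel]
    rfl
  have hmul : ∀ x, T.1.mulVec x = s • f x := by
    intro x
    rw [hTcoe, Matrix.smul_mulVec, hMmV]
  -- vector images
  have hfv0 : f (v 0) = c 0 • v' 0 := by rw [← hB0, hfB 0, hB'0]
  have hfv1 : f (v 1) = c 1 • v' 1 := by rw [← hB1, hfB 1, hB'1]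
  have hfv2 : f (v 2) = c 2 • v' 2 := by rw [← hB2, hfB 2, hB'2]
  have hfv3 : f (v 3) = v' 3 := by
    rw [hdec, map_add, map_add, map_smul, map_smul, map_smul, hfv0, hfv1, hfv2,
      smul_smul, smul_smul, smul_smul, hac 0, hac 1, hac 2, hdec']
  -- the functional step
  have main : ∀ (i : Fin 4) (lam : ℝ), lam ≠ 0 →
      η i (v 0) = lam * (c 0 * η' i (v' 0)) →
      η i (v 1) = lam * (c 1 * η' i (v' 1)) →
      η i (v 2) = lam * (c 2 * η' i (v' 2)) →
      ∃ d : ℝ, d ≠ 0 ∧ (η i).comp ((T⁻¹).1).mulVecLin = d • η' i := by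
    intro i lam hlam q0 q1 q2
    refine ⟨lam * s⁻¹, mul_ne_zero hlam (inv_ne_zero hsne), ?_⟩
    have hkey : η i = (lam * s⁻¹) • ((η' i).comp (T.1).mulVecLin) := by
      apply B.ext
      intro j
      rw [LinearMap.smul_apply, LinearMap.comp_apply, Matrix.mulVecLin_apply, hmul,
        hfB j, map_smul, map_smul]
      fin_cases j
      · show (η i) (B 0) = (lam * s⁻¹) • s • c 0 • (η' i) (B' 0)
        rw [hB0, hB'0, q0]
        simp only [smul_eq_mul]
        field_simp
      · show (η i) (B 1) = (lam * s⁻¹) • s • c 1 • (η' i) (B' 1)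
        rw [hB1, hB'1, q1]
        simp only [smul_eq_mul]
        field_simp
      · show (η i) (B 2) = (lam * s⁻¹) • s • c 2 • (η' i) (B' 2)
        rw [hB2, hB'2, q2]
        simp only [smul_eq_mul]
        field_simp
    apply LinearMap.ext
    intro x
    rw [LinearMap.comp_apply, Matrix.mulVecLin_apply, LinearMap.smul_apply, smul_eq_mul]
    conv_lhs => rw [hkey]
    rw [LinearMap.smul_apply, LinearMap.comp_apply, Matrix.mulVecLin_apply,
      Matrix.mulVec_mulVec, hTinv, Matrix.one_mulVec]
    rw [smul_eq_mul]
  -- per-coordinate scalar identities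
  have hdivide : ∀ (i j : Fin 4) (k : Fin 3) (lam : ℝ),
      a k * η i (v j) = lam * (a' k * η' i (v' j)) →
      η i (v j) = lam * (c k * η' i (v' j)) := by
    intro i j k lam hk
    simp only [hcdef]
    have hak := hane k
    field_simp
    linear_combination hk
  intro i
  fin_cases i
  · exact ⟨⟨s * c 0, mul_ne_zero hsne (hcne 0), by rw [hmul]; show s • f (v 0) = (s * c 0) • v' 0; rw [hfv0, smul_smul]⟩,
      main 0 l0 hl0
        (by rw [hηv 0, hηv' 0]; ring)
        (hdivide 0 1 1 l0 e01) (hdivide 0 2 2 l0 e02)⟩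
  · exact ⟨⟨s * c 1, mul_ne_zero hsne (hcne 1), by rw [hmul]; show s • f (v 1) = (s * c 1) • v' 1; rw [hfv1, smul_smul]⟩,
      main 1 l1 hl1
        (hdivide 1 0 0 l1 e10)
        (by rw [hηv 1, hηv' 1]; ring)
        (hdivide 1 2 2 l1 e12)⟩
  · exact ⟨⟨s * c 2, mul_ne_zero hsne (hcne 2), by rw [hmul]; show s • f (v 2) = (s * c 2) • v' 2; rw [hfv2, smul_smul]⟩,
      main 2 l2 hl2
        (hdivide 2 0 0 l2 e20) (hdivide 2 1 1 l2 e21)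
        (by rw [hηv 2, hηv' 2]; ring)⟩
  · exact ⟨⟨s, hsne, by rw [hmul]; show s • f (v 3) = s • v' 3; rw [hfv3]⟩,
      main 3 l3 hl3
        (hdivide 3 0 0 l3 e30) (hdivide 3 1 1 l3 e31) (hdivide 3 2 2 l3 e32)⟩
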